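/- Level-set growth for finite classes under bounded loss: Let ℋ be a finite hypothesis class with |ℋ| ≥ 2 and let the loss satisfy 0 ≤ ℓ(y', y) ≤ M for all y', y. Let μ be the counting measure on ℋ and let 𝒯 = {M, 2M, …, N·M} with N = ⌈12 ln|ℋ|⌉. Then the number of tolerances t ∈ 𝒯 for which μ(ℋ_{t+M}) > 2·μ(ℋ_{t−M}) is at most 3 ln|ℋ|; consequently, at least (3/4)·|𝒯| tolerances t ∈ 𝒯 satisfy both μ(ℋ_{t+M}) ≤ 2·μ(ℋ_{t−M}) and ℋ_{t−M} ⊆ ℋ_{t,i} ⊆ ℋ_{t+M} for all i ∈ {1,…,n}. -/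

import Mathlib

open Finset
open scoped Classical

lemma double_lemma (c : ℕ → ℕ) (hc : Monotone c) (hpos : ∀ k, 1 ≤ k → 1 ≤ c k) :
    ∀ (m : ℕ) (B : Finset ℕ), B.card = m →
    (∀ k ∈ B, 2 * c k < c (k + 2)) →
    (∀ k ∈ B, 1 ≤ k) →
    (∀ k ∈ B, ∀ k' ∈ B, k < k' → k + 2 ≤ k') →
    ∀ b, (∀ k ∈ B, k ≤ b) → 2 ^ (B.card + 1) ≤ c (b + 2) + 1 := by
  intro m
  induction m with
  | zero =>
    intro B hB _ _ _ b _
    rw [Finset.card_eq_zero.mp hB]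
    simpa using hpos (b + 2) (by omega)
  | succ m ih =>
    intro B hB hbad hone hsp b hb
    have hne : B.Nonempty := by rw [← Finset.card_pos, hB]; omega
    set b0 := B.max' hne with hb0
    have hb0B : b0 ∈ B := B.max'_mem hne
    set B' := B.erase b0 with hB'
    have hcard : B'.card = m := by
      rw [hB', Finset.card_erase_of_mem hb0B, hB]
      omega
    have hbadb0 := hbad b0 hb0B
    have hb0b : b0 ≤ b := hb b0 hb0B
    have hmono : c (b0 + 2) ≤ c (b + 2) := hc (by omega)
    rcases B'.eq_empty_or_nonempty with hE | hNE
    · have hm : m = 0 := by rw [hE] at hcard; simp at hcard; omega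
      have hc1 : B.card = 1 := by omega
      rw [hc1]
      have h1 : 1 ≤ c b0 := hpos b0 (hone b0 hb0B)
      have h4 : (2:ℕ) ^ (1 + 1) = 4 := by norm_num
      omega
    · have hsub : ∀ k ∈ B', k ∈ B := fun k hk => Finset.mem_of_mem_erase hk
      have hle : ∀ k ∈ B', k ≤ b0 - 2 := by
        intro k hk
        have hkB := hsub k hk
        have hkne : k ≠ b0 := Finset.ne_of_mem_erase hk
        have hkle : k ≤ b0 := B.le_max' k hkB
        have hklt : k < b0 := lt_of_le_of_ne hkle hkne
        have := hsp k hkB b0 hb0B hklt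
        omega
      have hb02 : 2 ≤ b0 := by
        obtain ⟨k, hk⟩ := hNE
        have := hle k hk
        have := hone k (hsub k hk)
        omega
      have hIH := ih B' hcard (fun k hk => hbad k (hsub k hk))
        (fun k hk => hone k (hsub k hk))
        (fun k hk k' hk' h => hsp k (hsub k hk) k' (hsub k' hk') h)
        (b0 - 2) hle
      have heq : b0 - 2 + 2 = b0 := by omega
      rw [heq, hcard] at hIH
      have hBc : B.card = m + 1 := hB
      rw [hBc]
      have h2 : 2 ^ (m + 1 + 1) = 2 * 2 ^ (m + 1) := by ring
      omega

/-- **Level-set growth for finite classes under bounded loss.**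
`H` is a finite hypothesis class with `|H| ≥ 2`, the loss takes values in `[0, M]`,
`μ` is the counting measure (`Finset.card`) and `𝒯 = {M, 2M, …, N·M}` with
`N = ⌈12 ln|H|⌉`.  Then the number of tolerances `t = k·M ∈ 𝒯` with
`|ℋ_{t+M}| > 2|ℋ_{t−M}|` is at most `3 ln|H|`, and consequently at least `(3/4)·|𝒯|`
tolerances satisfy both `|ℋ_{t+M}| ≤ 2|ℋ_{t−M}|` and `ℋ_{t−M} ⊆ ℋ_{t,i} ⊆ ℋ_{t+M}` for
all `i`. -/
theorem finite_class_levelset_growth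
    {𝒳 𝒴 𝒴' H : Type*} [Fintype H] (hH : 2 ≤ Fintype.card H)
    {n : ℕ} (x : Fin n → 𝒳) (y : Fin n → 𝒴)
    (eval : H → 𝒳 → 𝒴') (ℓ : 𝒴' → 𝒴 → ℝ) (M : ℝ)
    (hℓ : ∀ (y' : 𝒴') (yy : 𝒴), 0 ≤ ℓ y' yy ∧ ℓ y' yy ≤ M)
    (LS : H → ℝ) (hLS : ∀ h, LS h = ∑ i, ℓ (eval h (x i)) (y i))
    (LSm : Fin n → H → ℝ)
    (hLSm : ∀ i h, LSm i h = ∑ j ∈ Finset.univ.erase i, ℓ (eval h (x j)) (y j))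
    (g : H) (hg : ∀ h, LS g ≤ LS h)
    (gm : Fin n → H) (hgm : ∀ i h, LSm i (gm i) ≤ LSm i h)
    (Ht : ℝ → Finset H)
    (hHt : ∀ s, Ht s = Finset.univ.filter fun h => LS h ≤ LS g + s)
    (Hti : ℝ → Fin n → Finset H)
    (hHti : ∀ s i, Hti s i = Finset.univ.filter fun h => LSm i h ≤ LSm i (gm i) + s)
    (N : ℕ) (hN : N = ⌈12 * Real.log (Fintype.card H)⌉₊) :
    ((((Finset.Icc 1 N).filter fun k : ℕ =>
        2 * ((Ht ((k : ℝ) * M - M)).card : ℝ) < ((Ht ((k : ℝ) * M + M)).card : ℝ)).card : ℝ)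
      ≤ 3 * Real.log (Fintype.card H)) ∧
    ((3 / 4 : ℝ) * N ≤
      (((Finset.Icc 1 N).filter fun k : ℕ =>
        ((Ht ((k : ℝ) * M + M)).card : ℝ) ≤ 2 * ((Ht ((k : ℝ) * M - M)).card : ℝ) ∧
        ∀ i : Fin n, Ht ((k : ℝ) * M - M) ⊆ Hti ((k : ℝ) * M) i ∧
          Hti ((k : ℝ) * M) i ⊆ Ht ((k : ℝ) * M + M)).card : ℝ)) := by
  set h := Fintype.card H with hh
  have hlogpos : (0:ℝ) < Real.log h := by
    apply Real.log_pos
    exact_mod_cast hH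
  -- key decomposition of the loss
  have key : ∀ (hy : H) (i : Fin n), LS hy = LSm i hy + ℓ (eval hy (x i)) (y i) := by
    intro hy i
    rw [hLS, hLSm]
    exact (Finset.sum_erase_add _ _ (Finset.mem_univ i)).symm
  -- inclusions hold for every real t and every i
  have incl : ∀ (t : ℝ) (i : Fin n),
      Ht (t - M) ⊆ Hti t i ∧ Hti t i ⊆ Ht (t + M) := by
    intro t i
    obtain ⟨hl1, hl2⟩ := fun hy : H => hℓ (eval hy (x i)) (y i) |>.1, fun hy : H => (hℓ (eval hy (x i)) (y i)).2
    constructor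
    · intro hy hmem
      rw [hHt] at hmem
      rw [hHti]
      simp only [Finset.mem_filter, Finset.mem_univ, true_and] at hmem ⊢
      have h1 : LSm i hy ≤ LS hy := by
        have := (hℓ (eval hy (x i)) (y i)).1
        rw [key hy i]; linarith
      have h2 : LS (gm i) ≤ LSm i (gm i) + M := by
        have := (hℓ (eval (gm i) (x i)) (y i)).2
        rw [key (gm i) i]; linarith
      have h3 : LS g ≤ LS (gm i) := hg (gm i)
      linarith
    · intro hy hmem
      rw [hHti] at hmem
      rw [hHt]
      simp only [Finset.mem_filter, Finset.mem_univ, true_and] at hmem ⊢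
      have h1 : LS hy ≤ LSm i hy + M := by
        have := (hℓ (eval hy (x i)) (y i)).2
        rw [key hy i]; linarith
      have h2 : LSm i g ≤ LS g := by
        have := (hℓ (eval g (x i)) (y i)).1
        rw [key g i]; linarith
      have h3 : LSm i (gm i) ≤ LSm i g := hgm i g
      linarith
  set P : ℕ → Prop := fun k =>
    2 * ((Ht ((k : ℝ) * M - M)).card : ℝ) < ((Ht ((k : ℝ) * M + M)).card : ℝ) with hP
  -- Part 1
  have part1 : (((Finset.Icc 1 N).filter P).card : ℝ) ≤ 3 * Real.log h := by
    rcases le_or_gt 0 M with hM | hM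
    · -- main case: M ≥ 0
      set c : ℕ → ℕ := fun k => (Ht ((k : ℝ) * M - M)).card with hcdef
      have hcmono : Monotone c := by
        intro a b hab
        apply Finset.card_le_card
        rw [hHt, hHt]
        apply Finset.monotone_filter_right
        intro hy _ hyle
        have : (a:ℝ) * M ≤ (b:ℝ) * M :=
          mul_le_mul_of_nonneg_right (by exact_mod_cast hab) hM
        linarith
      have hcpos : ∀ k, 1 ≤ k → 1 ≤ c k := by
        intro k hk
        rw [Finset.one_le_card]
        refine ⟨g, ?_⟩
        rw [hHt]
        simp only [Finset.mem_filter, Finset.mem_univ, true_and]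
        have h1 : (1:ℝ) ≤ (k:ℝ) := by exact_mod_cast hk
        nlinarith
      have hcle : ∀ k, c k ≤ h := fun k => Finset.card_le_univ _
      have hshift : ∀ k : ℕ, (Ht ((k : ℝ) * M + M)).card = c (k + 2) := by
        intro k
        have : ((k : ℝ) * M + M) = ((k + 2 : ℕ) : ℝ) * M - M := by push_cast; ring
        rw [hcdef]; rw [this]
      set B := (Finset.Icc 1 N).filter P with hB
      have hbadB : ∀ k ∈ B, 2 * c k < c (k + 2) := by
        intro k hk
        have := (Finset.mem_filter.mp hk).2
        rw [hP] at this
        have h2 := hshift k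
        have : 2 * (c k : ℝ) < ((Ht ((k : ℝ) * M + M)).card : ℝ) := this
        rw [h2] at this
        exact_mod_cast this
      have honeB : ∀ k ∈ B, 1 ≤ k := by
        intro k hk
        exact (Finset.mem_Icc.mp (Finset.mem_filter.mp hk).1).1
      have hleB : ∀ k ∈ B, k ≤ N := by
        intro k hk
        exact (Finset.mem_Icc.mp (Finset.mem_filter.mp hk).1).2
      set Be := B.filter (fun k => k % 2 = 0) with hBe
      set Bo := B.filter (fun k => ¬ (k % 2 = 0)) with hBo
      have hsplit : Be.card + Bo.card = B.card :=
        Finset.card_filter_add_card_filter_not _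
      have hsubBe : ∀ k ∈ Be, k ∈ B := fun k hk => Finset.mem_of_mem_filter k hk
      have hsubBo : ∀ k ∈ Bo, k ∈ B := fun k hk => Finset.mem_of_mem_filter k hk
      have hspBe : ∀ k ∈ Be, ∀ k' ∈ Be, k < k' → k + 2 ≤ k' := by
        intro k hk k' hk' hlt
        have h1 := (Finset.mem_filter.mp hk).2
        have h2 := (Finset.mem_filter.mp hk').2
        omega
      have hspBo : ∀ k ∈ Bo, ∀ k' ∈ Bo, k < k' → k + 2 ≤ k' := by
        intro k hk k' hk' hlt
        have h1 := (Finset.mem_filter.mp hk).2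
        have h2 := (Finset.mem_filter.mp hk').2
        omega
      have hdbe := double_lemma c hcmono hcpos Be.card Be rfl
        (fun k hk => hbadB k (hsubBe k hk)) (fun k hk => honeB k (hsubBe k hk))
        hspBe N (fun k hk => hleB k (hsubBe k hk))
      have hdbo := double_lemma c hcmono hcpos Bo.card Bo rfl
        (fun k hk => hbadB k (hsubBo k hk)) (fun k hk => honeB k (hsubBo k hk))
        hspBo N (fun k hk => hleB k (hsubBo k hk))
      have hcN := hcle (N + 2)
      have hbe2 : 2 ^ Be.card ≤ h := by
        have : 2 ^ (Be.card + 1) = 2 * 2 ^ Be.card := by ring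
        omega
      have hbo2 : 2 ^ Bo.card ≤ h := by
        have : 2 ^ (Bo.card + 1) = 2 * 2 ^ Bo.card := by ring
        omega
      have hbeR : (Be.card : ℝ) * Real.log 2 ≤ Real.log h := by
        have h1 : Real.log ((2:ℝ) ^ Be.card) ≤ Real.log h :=
          Real.log_le_log (by positivity) (by exact_mod_cast hbe2)
        rwa [Real.log_pow] at h1
      have hboR : (Bo.card : ℝ) * Real.log 2 ≤ Real.log h := by
        have h1 : Real.log ((2:ℝ) ^ Bo.card) ≤ Real.log h :=
          Real.log_le_log (by positivity) (by exact_mod_cast hbo2)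
        rwa [Real.log_pow] at h1
      have hlog2 : (0.6931471803 : ℝ) < Real.log 2 := Real.log_two_gt_d9
      have hcardB : (B.card : ℝ) = (Be.card : ℝ) + (Bo.card : ℝ) := by
        exact_mod_cast hsplit.symm
      rw [hcardB]
      nlinarith [hbeR, hboR, hlogpos, (by positivity : (0:ℝ) ≤ (Be.card:ℝ)),
        (by positivity : (0:ℝ) ≤ (Bo.card:ℝ))]
    · -- degenerate case: M < 0, then no k is bad
      have hempty : (Finset.Icc 1 N).filter P = ∅ := by
        apply Finset.filter_false_of_mem
        intro k hk
        rw [hP, not_lt]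
        have hsub : Ht ((k : ℝ) * M + M) ⊆ Ht ((k : ℝ) * M - M) := by
          rw [hHt, hHt]
          apply Finset.monotone_filter_right
          intro hy _ hyle
          linarith
        have := Finset.card_le_card hsub
        have h2 : ((Ht ((k : ℝ) * M + M)).card : ℝ) ≤ ((Ht ((k : ℝ) * M - M)).card : ℝ) := by
          exact_mod_cast this
        have h3 : (0:ℝ) ≤ ((Ht ((k : ℝ) * M - M)).card : ℝ) := Nat.cast_nonneg _
        linarith
      rw [hempty, Finset.card_empty]
      rw [Nat.cast_zero]
      positivity
  refine ⟨part1, ?_⟩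
  -- Part 2
  set Q : ℕ → Prop := fun k =>
    ((Ht ((k : ℝ) * M + M)).card : ℝ) ≤ 2 * ((Ht ((k : ℝ) * M - M)).card : ℝ) ∧
    ∀ i : Fin n, Ht ((k : ℝ) * M - M) ⊆ Hti ((k : ℝ) * M) i ∧
      Hti ((k : ℝ) * M) i ⊆ Ht ((k : ℝ) * M + M) with hQ
  have hQiff : ∀ k ∈ Finset.Icc 1 N, (Q k ↔ ¬ P k) := by
    intro k _
    rw [hQ, hP]
    simp only [not_lt]
    constructor
    · intro ⟨h1, _⟩; exact h1
    · intro h1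
      refine ⟨h1, fun i => incl ((k:ℝ) * M) i⟩
  have hfeq : (Finset.Icc 1 N).filter Q = (Finset.Icc 1 N).filter (fun k => ¬ P k) :=
    Finset.filter_congr hQiff
  have hcards : ((Finset.Icc 1 N).filter P).card + ((Finset.Icc 1 N).filter (fun k => ¬ P k)).card
      = N := by
    rw [Finset.card_filter_add_card_filter_not]
    simp
  have hNge : 12 * Real.log h ≤ (N : ℝ) := by
    rw [hN]
    exact Nat.le_ceil _
  have hcast : (((Finset.Icc 1 N).filter (fun k => ¬ P k)).card : ℝ)
      = (N : ℝ) - (((Finset.Icc 1 N).filter P).card : ℝ) := by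
    have h2 : (((Finset.Icc 1 N).filter P).card : ℝ)
        + (((Finset.Icc 1 N).filter (fun k => ¬ P k)).card : ℝ) = (N : ℝ) := by
      exact_mod_cast hcards
    linarith
  rw [hfeq, hcast]
  linarith
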